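/- If G is a 1-extendable graph, then for every module M of G, the induced subgraph G[M] is 1-extendable. -/

import Mathlib

open scoped Classical

variable {V : Type*}

/-- `S` is an independent set of the graph `G`. -/
def IndepF (G : SimpleGraph V) (S : Finset V) : Prop :=
  ∀ u ∈ S, ∀ v ∈ S, ¬ G.Adj u v

/-- The independence number of `G`. -/
noncomputable def alphaN [Fintype V] (G : SimpleGraph V) : ℕ :=
  Finset.univ.powerset.sup fun S => if IndepF G S then S.card else 0

/-- `G` is 1-extendable: every vertex belongs to a maximum independent set. -/
def OneExt [Fintype V] (G : SimpleGraph V) : Prop :=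
  ∀ v : V, ∃ S : Finset V, v ∈ S ∧ IndepF G S ∧ S.card = alphaN G

/-- The 1-extendable chromatic number of `G`. -/
noncomputable def chiOneExt [Fintype V] (G : SimpleGraph V) : ℕ :=
  sInf {k | ∃ c : V → Fin k, ∀ i : Fin k, OneExt (G.induce {v | c v = i})}

/-- The join (complete sum) of two graphs. -/
def gJoin {α β : Type*} (G : SimpleGraph α) (H : SimpleGraph β) : SimpleGraph (α ⊕ β) where
  Adj u v := match u, v with
    | Sum.inl u, Sum.inl v => G.Adj u v
    | Sum.inr u, Sum.inr v => H.Adj u v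
    | Sum.inl _, Sum.inr _ => True
    | Sum.inr _, Sum.inl _ => True
  symm := ⟨by rintro (u|u) (v|v) h <;> simp_all [SimpleGraph.adj_comm]⟩
  loopless := ⟨by rintro (u|u) h <;> simp_all⟩

/-- `M` is a module of `G`. -/
def IsModule (G : SimpleGraph V) (M : Set V) : Prop :=
  ∀ v ∉ M, (∀ m ∈ M, G.Adj v m) ∨ (∀ m ∈ M, ¬ G.Adj v m)


lemma le_alphaN [Fintype V] (G : SimpleGraph V) {S : Finset V} (h : IndepF G S) :
    S.card ≤ alphaN G := by
  have := Finset.le_sup (f := fun S => if IndepF G S then S.card else 0)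
    (Finset.mem_powerset.2 (Finset.subset_univ S))
  simpa [h, alphaN] using this

lemma exists_alphaN [Fintype V] (G : SimpleGraph V) :
    ∃ S : Finset V, IndepF G S ∧ S.card = alphaN G := by
  obtain ⟨S, hS, hval⟩ := Finset.exists_mem_eq_sup Finset.univ.powerset ⟨∅, by simp⟩
    (fun S => if IndepF G S then S.card else 0)
  by_cases h : IndepF G S
  · exact ⟨S, h, by rw [alphaN, hval, if_pos h]⟩
  · refine ⟨∅, fun u hu => absurd hu (Finset.notMem_empty u), ?_⟩
    rw [Finset.card_empty, alphaN, hval, if_neg h]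

/-- If  is 1-extendable, then so is the subgraph induced by any module. -/
theorem module_oneExt [Fintype V] (G : SimpleGraph V) (hG : OneExt G)
    (M : Set V) (hM : IsModule G M) :
    OneExt (G.induce M) := by
  intro v
  obtain ⟨S, hvS, hS, hcard⟩ := hG v.val
  set T : Finset M := Finset.univ.filter (fun m => (m : V) ∈ S) with hT
  have hvT : v ∈ T := by simp [hT, hvS]
  have hTind : IndepF (G.induce M) T := by
    intro a ha b hb hab
    exact hS a (by simpa [hT] using ha) b (by simpa [hT] using hb) hab
  have hTcard : T.card = (S.filter (fun x => x ∈ M)).card := by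
    rw [← Finset.card_image_of_injective T Subtype.val_injective]
    congr 1
    ext x
    simp only [Finset.mem_image, Finset.mem_filter, hT, Finset.mem_univ, true_and]
    constructor
    · rintro ⟨a, ha, rfl⟩; exact ⟨ha, a.property⟩
    · rintro ⟨hx, hxM⟩; exact ⟨⟨x, hxM⟩, hx, rfl⟩
  have hmax : ∀ U : Finset M, IndepF (G.induce M) U → U.card ≤ T.card := by
    intro U hU
    set W := S.filter (fun x => x ∉ M) ∪ U.image Subtype.val with hW
    have hWind : IndepF G W := by
      intro a ha b hb hab
      simp only [hW, Finset.mem_union, Finset.mem_filter, Finset.mem_image] at ha hb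
      rcases ha with ⟨haS, haM⟩ | ⟨a', ha', rfl⟩
      · rcases hb with ⟨hbS, hbM⟩ | ⟨b', hb', rfl⟩
        · exact hS a haS b hbS hab
        · rcases hM a haM with hall | hnone
          · exact hS a haS v.val hvS (hall v.val v.property)
          · exact hnone _ b'.property hab
      · rcases hb with ⟨hbS, hbM⟩ | ⟨b', hb', rfl⟩
        · rcases hM b hbM with hall | hnone
          · exact hS b hbS v.val hvS (hall v.val v.property)
          · exact hnone _ a'.property hab.symm
        · exact hU a' ha' b' hb' hab
    have hdisj : Disjoint (S.filter (fun x => x ∉ M)) (U.image Subtype.val) := by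
      rw [Finset.disjoint_left]
      rintro x hx hx2
      simp only [Finset.mem_filter] at hx
      obtain ⟨a, _, rfl⟩ := Finset.mem_image.1 hx2
      exact hx.2 a.property
    have hWcard : W.card = (S.filter (fun x => x ∉ M)).card + U.card := by
      rw [hW, Finset.card_union_of_disjoint hdisj,
        Finset.card_image_of_injective U Subtype.val_injective]
    have hsplit : (S.filter (fun x => x ∈ M)).card + (S.filter (fun x => x ∉ M)).card
        = S.card := by rw [Finset.card_filter_add_card_filter_not]
    have hle : W.card ≤ alphaN G := le_alphaN G hWind
    omega
  obtain ⟨U, hU, hUcard⟩ := exists_alphaN (G.induce M)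
  exact ⟨T, hvT, hTind, le_antisymm (le_alphaN _ hTind) (hUcard ▸ hmax U hU)⟩
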